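/- On ℝ⁵ with coordinates (V,X,W,Y,Z), let g be the field of symmetric bilinear forms given by g = 2dV·(dX − 2X dW + ½(Y² + Z²) dV + ½(Y dZ − Z dY)) + 2dW·(dY − Y dW − Z dV) + (dZ − Z dW + Y dV)², where each coefficient is the indicated polynomial function of the point, and for λ ∈ ℝ let φ_λ be the linear map φ_λ(V,X,W,Y,Z) = (V e^{−2λ}, X e^{2λ}, W e^{−λ}, Y e^{λ}, Z). Then for every point q ∈ ℝ⁵ and all tangent vectors u,v ∈ ℝ⁵, the pullback (φ_λ^* g)(q)(u,v) = g(φ_λ(q))(φ_λ u, φ_λ v) converges, as λ → ∞, to G(u,v), where G is the constant (flat) form G = 2 dV dX + 2 dW dY + dZ². -/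

import Mathlib

open Filter

namespace Stmt9

/-- Coordinates: `q 0 = V`, `q 1 = X`, `q 2 = W`, `q 3 = Y`, `q 4 = Z`.
The 1-form `dX − 2X dW + ½(Y² + Z²) dV + ½(Y dZ − Z dY)` at the point `q`. -/
noncomputable def ω (q u : Fin 5 → ℝ) : ℝ :=
  u 1 - 2 * q 1 * u 2 + (1 / 2) * (q 3 ^ 2 + q 4 ^ 2) * u 0 +
    (1 / 2) * (q 3 * u 4 - q 4 * u 3)

/-- The 1-form `dY − Y dW − Z dV` at the point `q`. -/
def η (q u : Fin 5 → ℝ) : ℝ := u 3 - q 3 * u 2 - q 4 * u 0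

/-- The 1-form `dZ − Z dW + Y dV` at the point `q`. -/
def σ' (q u : Fin 5 → ℝ) : ℝ := u 4 - q 4 * u 2 + q 3 * u 0

/-- The field of symmetric bilinear forms
`g = 2dV·(dX − 2X dW + ½(Y²+Z²) dV + ½(Y dZ − Z dY)) + 2dW·(dY − Y dW − Z dV)
      + (dZ − Z dW + Y dV)²`. -/
noncomputable def metric (q u v : Fin 5 → ℝ) : ℝ :=
  (u 0 * ω q v + ω q u * v 0) + (u 2 * η q v + η q u * v 2) + σ' q u * σ' q v

/-- The linear map `φ_λ(V,X,W,Y,Z) = (V e^{−2λ}, X e^{2λ}, W e^{−λ}, Y e^{λ}, Z)`. -/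
noncomputable def φ (l : ℝ) (q : Fin 5 → ℝ) : Fin 5 → ℝ :=
  ![q 0 * Real.exp (-2 * l), q 1 * Real.exp (2 * l), q 2 * Real.exp (-l),
    q 3 * Real.exp l, q 4]

/-- The constant flat form `G = 2 dV dX + 2 dW dY + dZ²`. -/
def flatG (u v : Fin 5 → ℝ) : ℝ :=
  u 0 * v 1 + u 1 * v 0 + u 2 * v 3 + u 3 * v 2 + u 4 * v 4

/-- For every point `q` and tangent vectors `u, v`, the pullback
`(φ_λ^* g)(q)(u,v) = g(φ_λ q)(φ_λ u, φ_λ v)` converges to `G(u,v)` as `λ → ∞`. -/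
theorem pullback_tendsto_flat (q u v : Fin 5 → ℝ) :
    Tendsto (fun l : ℝ => metric (φ l q) (φ l u) (φ l v)) atTop (nhds (flatG u v)) := by
  set A : ℝ := -2*q 1*u 0*v 2 + (3/2)*q 3*u 0*v 4 - (1/2)*q 4*u 0*v 3
      - 2*q 1*u 2*v 0 + (3/2)*q 3*u 4*v 0 - (1/2)*q 4*u 3*v 0
      - 2*q 3*u 2*v 2 - q 4*u 4*v 2 - q 4*u 2*v 4 with hA
  set B : ℝ := 2*q 3^2*u 0*v 0 + q 4^2*u 2*v 2 - q 3*q 4*u 2*v 0 - q 3*q 4*u 0*v 2 with hB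
  set C : ℝ := -q 4*u 2*v 0 - q 4*u 0*v 2 with hC
  set D : ℝ := q 4^2*u 0*v 0 with hD
  have key : ∀ l : ℝ, metric (φ l q) (φ l u) (φ l v)
      = flatG u v + A * Real.exp (-l) + B * Real.exp (-l) ^ 2
        + C * Real.exp (-l) ^ 3 + D * Real.exp (-l) ^ 4 := by
    intro l
    have hb : Real.exp (-l) ≠ 0 := (Real.exp_pos _).ne'
    have h1 : Real.exp l = (Real.exp (-l))⁻¹ := by
      rw [← Real.exp_neg, neg_neg]
    have h2 : Real.exp (2 * l) = ((Real.exp (-l))⁻¹) ^ 2 := by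
      rw [two_mul, Real.exp_add, h1, sq]
    have h3 : Real.exp (-2 * l) = Real.exp (-l) ^ 2 := by
      have : (-2 : ℝ) * l = -l + -l := by ring
      rw [this, Real.exp_add, sq]
    simp only [metric, ω, η, σ', φ, flatG, Matrix.cons_val_zero, Matrix.cons_val_one,
      Matrix.head_cons, Matrix.cons_val_two, Matrix.tail_cons, Matrix.cons_val_three,
      Matrix.cons_val_four, Matrix.cons_val_fin_one]
    rw [h1, h2, h3]
    field_simp
    ring
  have hlim : Tendsto (fun l : ℝ => Real.exp (-l)) atTop (nhds 0) :=
    Real.tendsto_exp_neg_atTop_nhds_zero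
  have h0 : Tendsto (fun t : ℝ => flatG u v + A * t + B * t ^ 2 + C * t ^ 3 + D * t ^ 4)
      (nhds 0) (nhds (flatG u v)) := by
    have hc : Continuous fun t : ℝ => flatG u v + A * t + B * t ^ 2 + C * t ^ 3 + D * t ^ 4 := by
      continuity
    have := hc.tendsto 0
    simpa using this
  have := h0.comp hlim
  simp only [Function.comp_def] at this
  simpa only [key] using this

end Stmt9
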